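/- Let n > 10^(10^10) be an extraordinary number with largest prime factor p, and write n = m·p with gcd(m, p) = 1. Then 2·(p² + p + 1)·log p > (log (m·p²))·(log log (m·p²)), and consequently p > (1/3)·√(log n) > 20000. -/

import Mathlib

/-- Sum of the positive divisors of `n`. -/
def sigma1 (n : ℕ) : ℕ := ∑ d ∈ n.divisors, d

/-- `G n = σ(n) / (n · log log n)`. -/
noncomputable def G (n : ℕ) : ℝ := (sigma1 n : ℝ) / ((n : ℝ) * Real.log (Real.log n))

/-- `n` is a GA1 number: composite and `G n ≥ G (n/p)` for every prime `p ∣ n`. -/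
def GA1 (n : ℕ) : Prop :=
  1 < n ∧ ¬ n.Prime ∧ ∀ p : ℕ, p.Prime → p ∣ n → G (n / p) ≤ G n

/-- `n` is a GA2 number: `n > 1` and `G n ≥ G (c·n)` for all positive integers `c`. -/
def GA2 (n : ℕ) : Prop :=
  1 < n ∧ ∀ c : ℕ, 0 < c → G (c * n) ≤ G n

/-- `n` is extraordinary: both GA1 and GA2. -/
def Extraordinary (n : ℕ) : Prop := GA1 n ∧ GA2 n

lemma sigma1_eq_sigma (n : ℕ) : sigma1 n = ArithmeticFunction.sigma 1 n := by
  rw [ArithmeticFunction.sigma_one_apply]; rfl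

lemma sigma1_mul {a b : ℕ} (h : Nat.Coprime a b) :
    sigma1 (a * b) = sigma1 a * sigma1 b := by
  simp only [sigma1_eq_sigma]
  exact ArithmeticFunction.isMultiplicative_sigma.map_mul_of_coprime h

lemma sigma1_prime {p : ℕ} (hp : p.Prime) : sigma1 p = p + 1 := by
  have := ArithmeticFunction.sigma_one_apply_prime_pow (p := p) (i := 1) hp
  rw [pow_one] at this
  rw [sigma1_eq_sigma, this]
  simp [Finset.sum_range_succ]
  omega

lemma sigma1_prime_sq {p : ℕ} (hp : p.Prime) : sigma1 (p ^ 2) = p ^ 2 + p + 1 := by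
  have := ArithmeticFunction.sigma_one_apply_prime_pow (p := p) (i := 2) hp
  rw [sigma1_eq_sigma, this]
  simp [Finset.sum_range_succ]; ring

lemma sigma1_pos {m : ℕ} (hm : 0 < m) : 0 < sigma1 m := by
  unfold sigma1
  refine Finset.sum_pos (fun d hd => Nat.pos_of_mem_divisors hd) ?_
  exact ⟨m, Nat.mem_divisors_self m hm.ne'⟩

set_option maxHeartbeats 1000000 in
/-- If `n > 10^(10^10)` is extraordinary with largest prime factor `p` and `n = m·p`
with `gcd(m,p) = 1`, then `2(p² + p + 1)·log p > (log(m·p²))·(log log(m·p²))` and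
consequently `p > (1/3)·√(log n) > 20000`. -/
theorem extraordinary_large_prime_factor (n m p : ℕ) (hn : 10 ^ (10 ^ 10) < n)
    (hext : Extraordinary n) (hp : p.Prime) (hpn : p ∣ n)
    (hmax : ∀ q : ℕ, q.Prime → q ∣ n → q ≤ p)
    (hnm : n = m * p) (hcop : Nat.gcd m p = 1) :
    Real.log ((m : ℝ) * (p : ℝ) ^ 2) * Real.log (Real.log ((m : ℝ) * (p : ℝ) ^ 2)) <
      2 * ((p : ℝ) ^ 2 + (p : ℝ) + 1) * Real.log p ∧
    (1 / 3) * Real.sqrt (Real.log n) < (p : ℝ) ∧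
    20000 < (1 / 3) * Real.sqrt (Real.log n) := by
  obtain ⟨⟨hn1, hnprime, _⟩, _, hGA2⟩ := hext
  obtain ⟨k, hk, hkn⟩ : ∃ k : ℕ, (k : ℝ) = 1e10 ∧ (10:ℝ) ^ k ≤ (n:ℝ) := by
    have h0 : (((10:ℕ) ^ (10 ^ 10 : ℕ) : ℕ) : ℝ) ≤ (n:ℝ) := Nat.cast_le.mpr hn.le
    rw [Nat.cast_pow, Nat.cast_ofNat] at h0
    exact ⟨10 ^ 10, by norm_num, h0⟩
  have hn2 : 2 ≤ n := hn1
  clear hn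
  have hp1 : 1 < p := hp.one_lt
  have hm1 : 1 < m := by
    by_contra h
    push_neg at h
    interval_cases m
    · simp [hnm] at hn1
    · exact hnprime (by rw [hnm, one_mul]; exact hp)
  have hplt : p < n := by
    calc p = 1 * p := (one_mul p).symm
    _ < m * p := by exact Nat.mul_lt_mul_of_lt_of_le hm1 le_rfl (by omega)
    _ = n := hnm.symm
  -- real abbreviations
  set L := Real.log n with hLdef
  set q := Real.log p with hqdef
  set l := Real.log L with hldef
  have hn0 : (0:ℝ) < n := by positivity
  have hp0 : (0:ℝ) < p := by positivity
  -- size of L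
  have hlog10 : (1:ℝ) < Real.log 10 := by
    rw [Real.lt_log_iff_exp_lt (by norm_num)]
    calc Real.exp 1 < 2.7182818286 := Real.exp_one_lt_d9
    _ < 10 := by norm_num
  have hLbig : (1e10 : ℝ) ≤ L := by
    have h1 : Real.log ((10:ℝ) ^ k) ≤ L := Real.log_le_log (by positivity) hkn
    rw [Real.log_pow, hk] at h1
    nlinarith
  have hL0 : (0:ℝ) < L := by linarith
  have hl1 : (1:ℝ) < l := by
    rw [hldef, Real.lt_log_iff_exp_lt hL0]
    calc Real.exp 1 < 2.7182818286 := Real.exp_one_lt_d9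
    _ < 1e10 := by norm_num
    _ ≤ L := hLbig
  have hl0 : (0:ℝ) < l := by linarith
  have hq0 : (0:ℝ) < q := Real.log_pos (by exact_mod_cast hp1)
  have hqL : q < L := Real.log_lt_log hp0 (by exact_mod_cast hplt)
  -- sigma computations
  have hcop2 : Nat.Coprime m (p ^ 2) := (Nat.coprime_iff_gcd_eq_one.mpr hcop).pow_right 2
  have hsn : sigma1 n = sigma1 m * (p + 1) := by
    rw [hnm, sigma1_mul (Nat.coprime_iff_gcd_eq_one.mpr hcop), sigma1_prime hp]
  have hpn2 : p * n = m * p ^ 2 := by rw [hnm]; ring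
  have hsnp : sigma1 (p * n) = sigma1 m * (p ^ 2 + p + 1) := by
    rw [hpn2, sigma1_mul hcop2, sigma1_prime_sq hp]
  -- log of p*n
  have hlognp : Real.log ((p:ℝ) * n) = L + q := by
    rw [Real.log_mul (ne_of_gt hp0) (ne_of_gt hn0)]; ring
  have hLq0 : (0:ℝ) < L + q := by linarith
  have hllq : (0:ℝ) < Real.log (L + q) := by
    have : l ≤ Real.log (L + q) := Real.log_le_log hL0 (by linarith)
    linarith
  -- the GA2 inequality
  have hG := hGA2 p hp.pos
  have hS0 : (0:ℝ) < (sigma1 m : ℝ) := by exact_mod_cast sigma1_pos (by omega)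
  have hkey1 : ((p:ℝ) ^ 2 + p + 1) * l ≤ ((p:ℝ) ^ 2 + p) * Real.log (L + q) := by
    unfold G at hG
    rw [hsnp, hsn] at hG
    push_cast at hG
    rw [hlognp] at hG
    rw [div_le_div_iff₀ (by positivity) (by positivity)] at hG
    have h' : ((sigma1 m : ℝ) * n) * ((((p:ℝ) ^ 2 + p + 1)) * l)
        ≤ ((sigma1 m : ℝ) * n) * ((((p:ℝ) ^ 2 + p)) * Real.log (L + q)) := by
      linarith [hG]
    exact le_of_mul_le_mul_left h' (by positivity)
  -- log(L+q) ≤ l + q/L  (cleared form: L * log(L+q) ≤ L*l + q)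
  have hlogle : L * Real.log (L + q) ≤ L * l + q := by
    have hdiv : Real.log ((L + q) / L) ≤ (L + q) / L - 1 :=
      Real.log_le_sub_one_of_pos (by positivity)
    rw [Real.log_div (ne_of_gt hLq0) (ne_of_gt hL0)] at hdiv
    have h2 : (L + q) / L - 1 = q / L := by field_simp; ring
    rw [h2] at hdiv
    have h3 : L * (Real.log (L + q) - l) ≤ L * (q / L) :=
      mul_le_mul_of_nonneg_left hdiv hL0.le
    have h4 : L * (q / L) = q := by field_simp
    nlinarith
  set A : ℝ := (p:ℝ) ^ 2 + p with hAdef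
  have hA0 : (0:ℝ) < A := by positivity
  -- key: L * l ≤ A * q
  have hkey : L * l ≤ A * q := by
    have h1 := mul_le_mul_of_nonneg_left hkey1 hL0.le
    have h2 := mul_le_mul_of_nonneg_left hlogle hA0.le
    linarith
  -- Part 1
  have hmp2 : (m:ℝ) * (p:ℝ) ^ 2 = (p:ℝ) * n := by
    have : (n:ℝ) = (m:ℝ) * p := by exact_mod_cast hnm
    rw [this]; ring
  have part1 : Real.log ((m : ℝ) * (p : ℝ) ^ 2) *
      Real.log (Real.log ((m : ℝ) * (p : ℝ) ^ 2)) <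
      2 * ((p : ℝ) ^ 2 + (p : ℝ) + 1) * q := by
    rw [hmp2, hlognp]
    have hmain : L * ((L + q) * Real.log (L + q)) < L * (2 * (A + 1) * q) := by
      have h2 : (L + q) * (L * Real.log (L + q)) ≤ (L + q) * (L * l + q) :=
        mul_le_mul_of_nonneg_left hlogle hLq0.le
      linarith [mul_le_mul_of_nonneg_left hkey hL0.le,
        mul_le_mul_of_nonneg_left hkey hq0.le,
        mul_pos (mul_pos hA0 hq0) (sub_pos.mpr hqL),
        mul_pos hq0 (sub_pos.mpr hqL)]
    have := (mul_lt_mul_iff_right₀ hL0).mp hmain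
    calc (L + q) * Real.log (L + q) < 2 * (A + 1) * q := this
    _ = 2 * ((p:ℝ) ^ 2 + p + 1) * q := by rw [hAdef]
  -- Part 2
  set s := Real.sqrt L with hsdef
  have hs2 : s ^ 2 = L := Real.sq_sqrt hL0.le
  have hs0 : (0:ℝ) < s := Real.sqrt_pos.mpr hL0
  have part2 : (1 / 3) * s < (p:ℝ) := by
    by_contra h
    push_neg at h
    have hps : (p:ℝ) ≤ s / 3 := by linarith
    have hql : q ≤ l / 2 := by
      have h1 : q ≤ Real.log s := Real.log_le_log hp0 (by linarith)
      have h2 : Real.log s = l / 2 := Real.log_sqrt hL0.le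
      linarith
    -- L*l ≤ A*q ≤ (s²/9 + s/3)*(l/2); L = s², contradiction
    have hAle : A ≤ s ^ 2 / 9 + s / 3 := by
      rw [hAdef]
      nlinarith [hps, hp0.le, hs0.le]
    have h3 : A * q ≤ (s ^ 2 / 9 + s / 3) * (l / 2) :=
      mul_le_mul hAle hql hq0.le (by positivity)
    have hs1 : (1:ℝ) < s := by nlinarith [hs2, hs0]
    have h5 : s ^ 2 * l * (17 / 18) ≤ s * l / 6 := by
      have : s ^ 2 * l ≤ (s ^ 2 / 9 + s / 3) * (l / 2) := by
        calc s ^ 2 * l = L * l := by rw [hs2]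
        _ ≤ A * q := hkey
        _ ≤ _ := h3
      linarith
    have h6 : s * l < s ^ 2 * l :=
      mul_lt_mul_of_pos_right (by nlinarith [hs1, hs0]) hl0
    linarith [mul_pos (pow_pos hs0 2) hl0]
  have part3 : (20000:ℝ) < (1 / 3) * s := by
    have h60 : (60000:ℝ) < s := by
      rw [hsdef]
      rw [show (60000:ℝ) = 60000 from rfl]
      refine Real.lt_sqrt_of_sq_lt ?_
      nlinarith
    linarith
  exact ⟨part1, part2, part3⟩
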